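/- At the root of unity q = exp(2π√(−1)/N), the N-th powers vanish: (B_+)^N = (B_−)^N = (C_+)^N = (C_−)^N = 0. -/

import Mathlib

open scoped BigOperators Matrix

noncomputable section

abbrev EndW (N L : ℕ) := Matrix (Fin L → Fin N) (Fin L → Fin N) ℂ

def tensorOp {N L : ℕ} (M : Fin L → Matrix (Fin N) (Fin N) ℂ) : EndW N L :=
  Matrix.of fun σ τ => ∏ i, M i (σ i) (τ i)

def siteOp {N L : ℕ} (i : Fin L) (M : Matrix (Fin N) (Fin N) ℂ) : EndW N L :=
  tensorOp fun j => if j = i then M else 1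

def qnum (q : ℂ) (m : ℕ) : ℂ := (q ^ m - (q ^ m)⁻¹) / (q - q⁻¹)

def qfact (q : ℂ) (m : ℕ) : ℂ := ∏ i ∈ Finset.range m, qnum q (i + 1)

def zpowMat {n : ℕ} (M : Matrix (Fin n) (Fin n) ℂ) (s : ℤ) : Matrix (Fin n) (Fin n) ℂ :=
  if 0 ≤ s then M ^ s.toNat else M⁻¹ ^ (-s).toNat

/-- `q = exp(2π√−1/N)`, a primitive `N`-th root of unity. -/
def qR (N : ℕ) : ℂ := Complex.exp (2 * Real.pi * Complex.I / N)

/-- `q^{1/2} = exp(π√−1/N)`. -/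
def qhR (N : ℕ) : ℂ := Complex.exp (Real.pi * Complex.I / N)

/-- `Z v_σ = q^σ v_σ`. -/
def Zmat (N : ℕ) : Matrix (Fin N) (Fin N) ℂ :=
  Matrix.diagonal fun σ => qR N ^ (σ : ℕ)

/-- `Z⁻¹ v_σ = q^{−σ} v_σ`. -/
def ZmatInv (N : ℕ) : Matrix (Fin N) (Fin N) ℂ :=
  Matrix.diagonal fun σ => (qR N ^ (σ : ℕ))⁻¹

/-- `X v_σ = v_{σ+1 mod N}`. -/
def Xmat (N : ℕ) : Matrix (Fin N) (Fin N) ℂ :=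
  Matrix.of fun ρ σ => if (ρ : ℕ) = ((σ : ℕ) + 1) % N then 1 else 0

/-- `X⁻¹ v_σ = v_{σ−1 mod N}`. -/
def XmatInv (N : ℕ) : Matrix (Fin N) (Fin N) ℂ :=
  Matrix.of fun ρ σ => if ((ρ : ℕ) + 1) % N = (σ : ℕ) then 1 else 0

/-- Nilpotent representation: `k̂^{1/2} := −q^{−1/2} Z⁻¹`. -/
def khalfNil (N : ℕ) : Matrix (Fin N) (Fin N) ℂ := (-(qhR N)⁻¹) • ZmatInv N

/-- Nilpotent representation: `ê := X⁻¹(Z⁻¹ − Z)/(q − q⁻¹)`. -/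
def eNil (N : ℕ) : Matrix (Fin N) (Fin N) ℂ :=
  (qR N - (qR N)⁻¹)⁻¹ • (XmatInv N * (ZmatInv N - Zmat N))

/-- Nilpotent representation: `f̂ := (Z − Z⁻¹)X/(q − q⁻¹)`. -/
def fNil (N : ℕ) : Matrix (Fin N) (Fin N) ℂ :=
  (qR N - (qR N)⁻¹)⁻¹ • ((Zmat N - ZmatInv N) * Xmat N)

/-- `k̂^{−1/2} := (k̂^{1/2})⁻¹`. -/
def khalfMNil (N : ℕ) : Matrix (Fin N) (Fin N) ℂ := (khalfNil N)⁻¹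

/-- `B₊` for the nilpotent representation. -/
def BplusNil (N L : ℕ) : EndW N L :=
  (qhR N ^ (L + 1))⁻¹ • ∑ i : Fin L, qR N ^ ((i : ℕ) + 1) •
    tensorOp fun j => if j < i then khalfMNil N else if j = i then fNil N else khalfNil N

/-- `B₋` for the nilpotent representation. -/
def BminusNil (N L : ℕ) : EndW N L :=
  (qhR N ^ (L + 1))⁻¹ • ∑ i : Fin L, qR N ^ ((i : ℕ) + 1) •
    tensorOp fun j => if j < i then khalfNil N else if j = i then fNil N else khalfMNil N

/-- `C₊` for the nilpotent representation. -/
def CplusNil (N L : ℕ) : EndW N L :=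
  qhR N ^ (L + 1) • ∑ i : Fin L, (qR N ^ ((i : ℕ) + 1))⁻¹ •
    tensorOp fun j => if j < i then khalfNil N else if j = i then eNil N else khalfMNil N

/-- `C₋` for the nilpotent representation. -/
def CminusNil (N L : ℕ) : EndW N L :=
  qhR N ^ (L + 1) • ∑ i : Fin L, (qR N ^ ((i : ℕ) + 1))⁻¹ •
    tensorOp fun j => if j < i then khalfMNil N else if j = i then eNil N else khalfNil N

/-- The `L`-operator of the nilpotent Bazhanov–Stroganov model. -/
def LopNBS (N L : ℕ) (i : Fin L) (z : ℂ) : Matrix (Fin 2) (Fin 2) (EndW N L) :=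
  !![(-(z * (qR N)⁻¹)) • siteOp i (ZmatInv N) + z⁻¹ • siteOp i (Zmat N),
     siteOp i (-((ZmatInv N - Zmat N) * Xmat N));
     siteOp i (XmatInv N * (ZmatInv N - Zmat N)),
     z⁻¹ • siteOp i (ZmatInv N) + (-(z * qR N)) • siteOp i (Zmat N)]

/-- The monodromy matrix `L_L(z) ⋯ L_1(z)` of the NBS model. -/
def monoNBS (N L : ℕ) (z : ℂ) : Matrix (Fin 2) (Fin 2) (EndW N L) :=
  ((List.ofFn fun i : Fin L => LopNBS N L i z).reverse).prod

def AopNBS (N L : ℕ) (z : ℂ) : EndW N L := monoNBS N L z 0 0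
def BopNBS (N L : ℕ) (z : ℂ) : EndW N L := monoNBS N L z 0 1
def CopNBS (N L : ℕ) (z : ℂ) : EndW N L := monoNBS N L z 1 0
def DopNBS (N L : ℕ) (z : ℂ) : EndW N L := monoNBS N L z 1 1

/-- The transfer matrix of the NBS model. -/
def tauNBS (N L : ℕ) (z : ℂ) : EndW N L := AopNBS N L z + DopNBS N L z

/-- `A∞ := (k̂^{1/2})^{⊗L}`. -/
def AinfNil (N L : ℕ) : EndW N L := tensorOp fun _ => khalfNil N

/-- `ĥ v_σ = (N − 1 − 2σ) v_σ`. -/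
def hmatN (N : ℕ) : Matrix (Fin N) (Fin N) ℂ :=
  Matrix.diagonal fun σ => (N : ℂ) - 1 - 2 * ((σ : ℕ) : ℂ)

/-- `H^{(N)} := (1/N) Σ_i ĥ_i`. -/
def Hop (N L : ℕ) : EndW N L := ((N : ℂ))⁻¹ • ∑ i : Fin L, siteOp i (hmatN N)

/-- `s_i(λ) = Σ_{j<i} λ_j − Σ_{j>i} λ_j`. -/
def sExp {L : ℕ} (lam : Fin L → ℕ) (i : Fin L) : ℤ :=
  (∑ j ∈ Finset.univ.filter (fun j => j < i), (lam j : ℤ)) -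
    ∑ j ∈ Finset.univ.filter (fun j => i < j), (lam j : ℤ)

/-- `Σ_j (2j − (L+1)) λ_j` (with `j` running 1-indexed), so that
`q^{Σ_j (j − (L+1)/2) λ_j} = qh^{wExp L λ}`. -/
def wExp (L : ℕ) (lam : Fin L → ℕ) : ℤ :=
  ∑ j : Fin L, (2 * ((j : ℕ) : ℤ) + 2 - ((L : ℤ) + 1)) * (lam j : ℤ)

/-- The divided power `B_+^{(n)}`. -/
def BdivP (N L : ℕ) (n : ℕ) : EndW N L :=
  ∑ lam ∈ Finset.univ.filter (fun lam : Fin L → Fin N => ∑ i, ((lam i : ℕ)) = n),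
    (qhR N ^ wExp L (fun j => (lam j : ℕ)) * (∏ i, qfact (qR N) ((lam i : ℕ)))⁻¹) •
      tensorOp fun i =>
        fNil N ^ ((lam i : ℕ)) * zpowMat (khalfNil N) (sExp (fun j => ((lam j : ℕ))) i)

/-- The divided power `B_-^{(n)}`. -/
def BdivM (N L : ℕ) (n : ℕ) : EndW N L :=
  ∑ lam ∈ Finset.univ.filter (fun lam : Fin L → Fin N => ∑ i, ((lam i : ℕ)) = n),
    (qhR N ^ wExp L (fun j => (lam j : ℕ)) * (∏ i, qfact (qR N) ((lam i : ℕ)))⁻¹) •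
      tensorOp fun i =>
        fNil N ^ ((lam i : ℕ)) * zpowMat (khalfNil N) (-sExp (fun j => ((lam j : ℕ))) i)

/-- The divided power `C_+^{(n)}`. -/
def CdivP (N L : ℕ) (n : ℕ) : EndW N L :=
  ∑ lam ∈ Finset.univ.filter (fun lam : Fin L → Fin N => ∑ i, ((lam i : ℕ)) = n),
    (qhR N ^ (-wExp L (fun j => (lam j : ℕ))) * (∏ i, qfact (qR N) ((lam i : ℕ)))⁻¹) •
      tensorOp fun i =>
        zpowMat (khalfNil N) (-sExp (fun j => ((lam j : ℕ))) i) * eNil N ^ ((lam i : ℕ))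

/-- The divided power `C_-^{(n)}`. -/
def CdivM (N L : ℕ) (n : ℕ) : EndW N L :=
  ∑ lam ∈ Finset.univ.filter (fun lam : Fin L → Fin N => ∑ i, ((lam i : ℕ)) = n),
    (qhR N ^ (-wExp L (fun j => (lam j : ℕ))) * (∏ i, qfact (qR N) ((lam i : ℕ)))⁻¹) •
      tensorOp fun i =>
        zpowMat (khalfNil N) (sExp (fun j => ((lam j : ℕ))) i) * eNil N ^ ((lam i : ℕ))

/-- The reference state `|0⟩ = v₀^{⊗L}`. -/
def vac (N L : ℕ) : (Fin L → Fin N) → ℂ := fun σ => if ∀ i, (σ i : ℕ) = 0 then 1 else 0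

/-- The Bethe equations. -/
def BetheEqs (N L R : ℕ) (q : ℂ) (zs : Fin R → ℂ) : Prop :=
  ∀ i : Fin R,
    ((zs i ^ 2 * q ^ (N - 1) - 1) / (zs i ^ 2 - q ^ (N - 1))) ^ L =
      q ^ L * ∏ j ∈ Finset.univ.erase i,
        (zs i ^ 2 * q ^ 2 - zs j ^ 2) / (zs i ^ 2 - zs j ^ 2 * q ^ 2)

/-- Regularity of a Bethe solution: nonzero, pairwise distinct, and nonzero denominators. -/
def RegularBethe (N L R : ℕ) (q : ℂ) (zs : Fin R → ℂ) : Prop :=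
  (∀ i, zs i ≠ 0) ∧ Function.Injective zs ∧
    (∀ i, zs i ^ 2 - q ^ (N - 1) ≠ 0) ∧
    (∀ i j, j ≠ i → zs i ^ 2 - zs j ^ 2 * q ^ 2 ≠ 0) ∧
    BetheEqs N L R q zs

/-- The Bethe state `B(z_1) ⋯ B(z_R) |0⟩` of the NBS model. -/
def betheStateNBS (N L R : ℕ) (zs : Fin R → ℂ) : (Fin L → Fin N) → ℂ :=
  ((List.ofFn fun i : Fin R => BopNBS N L (zs i)).prod) *ᵥ vac N L

section QBinomAux
open Finset

def gb (ζ : ℂ) : ℕ → ℕ → ℂ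
  | 0, 0 => 1
  | 0, _+1 => 0
  | n+1, 0 => gb ζ n 0
  | n+1, k+1 => gb ζ n k + ζ^(k+1) * gb ζ n (k+1)

lemma gb_zero (ζ : ℂ) : ∀ n, gb ζ n 0 = 1
  | 0 => rfl
  | n+1 => gb_zero ζ n

lemma gb_of_lt (ζ : ℂ) : ∀ n k, n < k → gb ζ n k = 0
  | 0, k+1, _ => rfl
  | n+1, k+1, h => by
    have h1 := gb_of_lt ζ n k (by omega)
    have h2 := gb_of_lt ζ n (k+1) (by omega)
    simp [gb, h1, h2]

variable {A : Type*} [Ring A] [Algebra ℂ A]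

lemma y_pow_x (ζ : ℂ) (x y : A) (h : y * x = ζ • (x * y)) :
    ∀ k, y * x ^ k = ζ ^ k • (x ^ k * y)
  | 0 => by simp
  | k+1 => by
    have ih := y_pow_x ζ x y h k
    calc y * x ^ (k+1) = (y * x ^ k) * x := by rw [pow_succ, mul_assoc]
    _ = ζ ^ k • (x ^ k * (y * x)) := by rw [ih, smul_mul_assoc, mul_assoc]
    _ = ζ ^ k • (x ^ k * (ζ • (x * y))) := by rw [h]
    _ = ζ ^ (k+1) • (x ^ (k+1) * y) := by
        rw [mul_smul_comm, smul_smul, ← mul_assoc, ← pow_succ, ← pow_succ]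

theorem qbinom (ζ : ℂ) (x y : A) (h : y * x = ζ • (x * y)) :
    ∀ n, (x + y) ^ n = ∑ k ∈ range (n+1), gb ζ n k • (x ^ k * y ^ (n - k))
  | 0 => by simp [gb_zero]
  | n+1 => by
    have ih := qbinom ζ x y h n
    have expand : (x + y) ^ (n+1) =
        (∑ k ∈ range (n+1), gb ζ n k • (x ^ (k+1) * y ^ (n-k))) +
        (∑ k ∈ range (n+1), (ζ ^ k * gb ζ n k) • (x ^ k * y ^ (n+1-k))) := by
      rw [pow_succ', ih, Finset.mul_sum]
      rw [← Finset.sum_add_distrib]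
      refine Finset.sum_congr rfl fun k hk => ?_
      have hk' : k ≤ n := Nat.lt_succ_iff.mp (mem_range.mp hk)
      rw [add_mul, mul_smul_comm, mul_smul_comm]
      congr 1
      · rw [← mul_assoc, ← pow_succ']
      · rw [← mul_assoc, y_pow_x ζ x y h k, smul_mul_assoc, smul_smul, mul_assoc, ← pow_succ']
        rw [show n + 1 - k = n - k + 1 from by omega, mul_comm (gb ζ n k) (ζ^k)]
    rw [expand]
    rw [Finset.sum_range_succ' (fun k => gb ζ (n+1) k • (x ^ k * y ^ (n+1-k))) (n+1)]
    have h0 : gb ζ (n+1) 0 • (x ^ 0 * y ^ (n+1-0)) = gb ζ n 0 • y ^ (n+1) := by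
      simp [gb]
    rw [h0]
    have hsplit : ∀ k ∈ range (n+1), gb ζ (n+1) (k+1) • (x ^ (k+1) * y ^ (n+1-(k+1)))
        = gb ζ n k • (x ^ (k+1) * y ^ (n-k)) + (ζ^(k+1) * gb ζ n (k+1)) • (x^(k+1) * y^(n-k)) := by
      intro k hk
      have he : n + 1 - (k+1) = n - k := by omega
      rw [he]
      show (gb ζ n k + ζ^(k+1) * gb ζ n (k+1)) • _ = _
      rw [add_smul]
    rw [Finset.sum_congr rfl hsplit, Finset.sum_add_distrib]
    have hsecond : (∑ k ∈ range (n+1), (ζ ^ k * gb ζ n k) • (x ^ k * y ^ (n+1-k)))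
        = (∑ k ∈ range (n+1), (ζ^(k+1) * gb ζ n (k+1)) • (x^(k+1) * y^(n-k))) + gb ζ n 0 • y ^ (n+1) := by
      rw [Finset.sum_range_succ' (fun k => (ζ ^ k * gb ζ n k) • (x ^ k * y ^ (n+1-k))) n]
      congr 1
      · rw [Finset.sum_range_succ]
        rw [gb_of_lt ζ n (n+1) (by omega)]
        simp only [mul_zero, zero_smul, add_zero]
        refine Finset.sum_congr rfl fun k hk => ?_
        have he : n + 1 - (k+1) = n - k := by omega
        rw [he]
      · simp [gb_zero]
    rw [hsecond]
    abel

lemma qmultinomial_nilpotent (ζ : ℂ) (N : ℕ) (hN : 0 < N)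
    (hgb : ∀ k, 0 < k → k < N → gb ζ N k = 0) :
    ∀ (m : ℕ) (x : Fin m → A), (∀ i j, i < j → x j * x i = ζ • (x i * x j)) →
      (∀ i, x i ^ N = 0) → (∑ i, x i) ^ N = 0
  | 0, x, _, _ => by simp [zero_pow hN.ne']
  | m+1, x, hcomm, hnil => by
    rw [Fin.sum_univ_castSucc]
    set a := ∑ i : Fin m, x i.castSucc with ha
    set b := x (Fin.last m) with hb
    have hba : b * a = ζ • (a * b) := by
      rw [ha, Finset.sum_mul, Finset.mul_sum, Finset.smul_sum]
      exact Finset.sum_congr rfl fun i _ =>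
        hcomm i.castSucc (Fin.last m) (Fin.castSucc_lt_last i)
    have haN : a ^ N = 0 :=
      qmultinomial_nilpotent ζ N hN hgb m (fun i => x i.castSucc)
        (fun i j hij => hcomm i.castSucc j.castSucc (by simpa using hij))
        (fun i => hnil i.castSucc)
    rw [qbinom ζ a b hba N]
    refine Finset.sum_eq_zero fun k hk => ?_
    rcases Nat.eq_zero_or_pos k with rfl | hk0
    · simp [hb, hnil (Fin.last m)]
    rcases eq_or_lt_of_le (Nat.lt_succ_iff.mp (mem_range.mp hk)) with rfl | hkN
    · simp [haN]
    · rw [hgb k hk0 hkN, zero_smul]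

lemma gb_prod (ζ : ℂ) : ∀ n k, k ≤ n →
    gb ζ n k * ∏ i ∈ range k, (1 - ζ^(i+1)) = ∏ i ∈ range k, (1 - ζ^(n-i))
  | 0, 0, _ => by simp [gb]
  | n+1, 0, _ => by simp [gb_zero]
  | n+1, k+1, h => by
    have hpeel : ∏ i ∈ range (k+1), (1 - ζ^(n+1-i))
        = (∏ i ∈ range k, (1 - ζ^(n-i))) * (1 - ζ^(n+1)) := by
      rw [Finset.prod_range_succ' (fun i => (1 - ζ^(n+1-i))) k, Nat.sub_zero]
      congr 1
      exact Finset.prod_congr rfl fun i _ => by rw [show n+1-(i+1) = n - i from by omega]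
    show (gb ζ n k + ζ^(k+1) * gb ζ n (k+1)) * _ = _
    rw [hpeel]
    rcases eq_or_lt_of_le h with heq | hlt
    · -- k = n
      have hkn : k = n := by omega
      subst hkn
      rw [gb_of_lt ζ k (k+1) (by omega)]
      rw [Finset.prod_range_succ (fun i => (1 - ζ^(i+1))) k]
      have ih := gb_prod ζ k k le_rfl
      linear_combination (1 - ζ^(k+1)) * ih
    · have hk1 : k + 1 ≤ n := by omega
      have ih1 := gb_prod ζ n k (by omega)
      have ih2 := gb_prod ζ n (k+1) (by omega)
      rw [Finset.prod_range_succ (fun i => (1 - ζ^(n-i))) k] at ih2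
      rw [Finset.prod_range_succ (fun i => (1 - ζ^(i+1))) k] at ih2 ⊢
      have hζexp : ζ^(k+1) * ζ^(n-k) = ζ^(n+1) := by
        rw [← pow_add]; congr 1; omega
      linear_combination (1 - ζ^(k+1)) * ih1 + ζ^(k+1) * ih2
        - (∏ i ∈ range k, (1 - ζ^(n-i))) * hζexp
  termination_by n k => n + k

lemma gb_vanish (ζ : ℂ) (N : ℕ) (hprim : IsPrimitiveRoot ζ N) (k : ℕ) (hk0 : 0 < k) (hkN : k < N) :
    gb ζ N k = 0 := by
  have h := gb_prod ζ N k hkN.le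
  have hzero : ∏ i ∈ range k, (1 - ζ^(N-i)) = 0 := by
    apply Finset.prod_eq_zero (Finset.mem_range.mpr hk0)
    rw [Nat.sub_zero, hprim.pow_eq_one, sub_self]
  rw [hzero] at h
  have hne : ∏ i ∈ range k, (1 - ζ^(i+1)) ≠ 0 := by
    apply Finset.prod_ne_zero_iff.mpr
    intro i hi
    have hne1 : ζ^(i+1) ≠ 1 := hprim.pow_ne_one_of_pos_of_lt (by omega) (by
      have := Finset.mem_range.mp hi; omega)
    exact sub_ne_zero.mpr fun he => hne1 he.symm
  rcases mul_eq_zero.mp h with h1 | h2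
  · exact h1
  · exact absurd h2 hne

end QBinomAux
namespace NthAux
open Finset Matrix

lemma qR_ne_zero (N : ℕ) : qR N ≠ 0 := Complex.exp_ne_zero _
lemma qhR_ne_zero (N : ℕ) : qhR N ≠ 0 := Complex.exp_ne_zero _

lemma qR_prim (N : ℕ) (hN0 : N ≠ 0) : IsPrimitiveRoot (qR N) N :=
  Complex.isPrimitiveRoot_exp N hN0

lemma qR_pow_N (N : ℕ) (hN0 : N ≠ 0) : qR N ^ N = 1 := (qR_prim N hN0).pow_eq_one

lemma khalf_diag (N : ℕ) :
    khalfNil N = Matrix.diagonal (fun σ : Fin N => -(qhR N)⁻¹ * (qR N ^ (σ : ℕ))⁻¹) := by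
  ext i j
  by_cases h : i = j <;>
    simp [khalfNil, ZmatInv, Matrix.diagonal_apply, h, Matrix.smul_apply]

lemma khalfM_diag (N : ℕ) :
    khalfMNil N = Matrix.diagonal (fun σ : Fin N => -(qhR N) * qR N ^ (σ : ℕ)) := by
  rw [khalfMNil]
  apply Matrix.inv_eq_right_inv
  rw [khalf_diag, Matrix.diagonal_mul_diagonal]
  ext i j
  by_cases h : i = j
  · subst h
    rw [Matrix.diagonal_apply_eq, Matrix.one_apply_eq]
    have h1 : qR N ^ (i : ℕ) ≠ 0 := pow_ne_zero _ (qR_ne_zero N)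
    have h2 : qhR N ≠ 0 := qhR_ne_zero N
    field_simp
  · rw [Matrix.diagonal_apply_ne _ h, Matrix.one_apply_ne h]

lemma fNil_apply (N : ℕ) (ρ σ : Fin N) :
    fNil N ρ σ = (qR N - (qR N)⁻¹)⁻¹ *
      ((qR N ^ (ρ : ℕ) - (qR N ^ (ρ : ℕ))⁻¹) *
        (if (ρ : ℕ) = ((σ : ℕ) + 1) % N then 1 else 0)) := by
  have : (Zmat N - ZmatInv N) = Matrix.diagonal
      (fun τ : Fin N => qR N ^ (τ : ℕ) - (qR N ^ (τ : ℕ))⁻¹) := by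
    rw [Zmat, ZmatInv, Matrix.diagonal_sub]
  rw [fNil, Matrix.smul_apply, this, smul_eq_mul, Matrix.diagonal_mul]
  rfl

lemma eNil_apply (N : ℕ) (ρ σ : Fin N) :
    eNil N ρ σ = (qR N - (qR N)⁻¹)⁻¹ *
      ((if ((ρ : ℕ) + 1) % N = (σ : ℕ) then 1 else 0) *
        ((qR N ^ (σ : ℕ))⁻¹ - qR N ^ (σ : ℕ))) := by
  have : (ZmatInv N - Zmat N) = Matrix.diagonal
      (fun τ : Fin N => (qR N ^ (τ : ℕ))⁻¹ - qR N ^ (τ : ℕ)) := by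
    rw [Zmat, ZmatInv, Matrix.diagonal_sub]
  rw [eNil, Matrix.smul_apply, this, smul_eq_mul, Matrix.mul_diagonal]
  rfl

lemma fNil_support (N : ℕ) (hN0 : N ≠ 0) (ρ σ : Fin N) (h : fNil N ρ σ ≠ 0) :
    (ρ : ℕ) = (σ : ℕ) + 1 := by
  rw [fNil_apply] at h
  by_cases hc : (ρ : ℕ) = ((σ : ℕ) + 1) % N
  · by_cases hσ : (σ : ℕ) + 1 < N
    · rwa [Nat.mod_eq_of_lt hσ] at hc
    · exfalso
      have hσN : (σ : ℕ) + 1 = N := by have := σ.isLt; omega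
      rw [hσN, Nat.mod_self] at hc
      have hρ : qR N ^ (ρ : ℕ) = 1 := by rw [hc]; rfl
      rw [hρ] at h
      simp at h
  · rw [if_neg hc] at h
    simp at h

lemma eNil_support (N : ℕ) (hN0 : N ≠ 0) (ρ σ : Fin N) (h : eNil N ρ σ ≠ 0) :
    (σ : ℕ) = (ρ : ℕ) + 1 := by
  rw [eNil_apply] at h
  by_cases hc : ((ρ : ℕ) + 1) % N = (σ : ℕ)
  · by_cases hρ : (ρ : ℕ) + 1 < N
    · rw [Nat.mod_eq_of_lt hρ] at hc; omega
    · exfalso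
      have hρN : (ρ : ℕ) + 1 = N := by have := ρ.isLt; omega
      rw [hρN, Nat.mod_self] at hc
      have hσ : qR N ^ (σ : ℕ) = 1 := by rw [← hc]; rfl
      rw [hσ] at h
      simp at h
  · rw [if_neg hc] at h
    simp at h

-- commutation lemmas
lemma khM_mul_f (N : ℕ) (hN0 : N ≠ 0) :
    khalfMNil N * fNil N = qR N • (fNil N * khalfMNil N) := by
  rw [khalfM_diag]
  ext ρ σ
  rw [Matrix.diagonal_mul, Matrix.smul_apply, Matrix.mul_diagonal, smul_eq_mul]
  by_cases hf : fNil N ρ σ = 0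
  · rw [hf]; ring
  · rw [fNil_support N hN0 ρ σ hf, pow_succ]; ring

lemma f_mul_kh (N : ℕ) (hN0 : N ≠ 0) :
    fNil N * khalfNil N = qR N • (khalfNil N * fNil N) := by
  rw [khalf_diag]
  ext ρ σ
  rw [Matrix.mul_diagonal, Matrix.smul_apply, Matrix.diagonal_mul, smul_eq_mul]
  by_cases hf : fNil N ρ σ = 0
  · rw [hf]; ring
  · rw [fNil_support N hN0 ρ σ hf, pow_succ, mul_inv]
    have hc := mul_inv_cancel₀ (qR_ne_zero N)
    linear_combination ((qhR N)⁻¹ * (qR N ^ (σ : ℕ))⁻¹ * fNil N ρ σ) * hc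

lemma kh_mul_e (N : ℕ) (hN0 : N ≠ 0) :
    khalfNil N * eNil N = qR N • (eNil N * khalfNil N) := by
  rw [khalf_diag]
  ext ρ σ
  rw [Matrix.diagonal_mul, Matrix.smul_apply, Matrix.mul_diagonal, smul_eq_mul]
  by_cases he : eNil N ρ σ = 0
  · rw [he]; ring
  · rw [eNil_support N hN0 ρ σ he, pow_succ, mul_inv]
    have hc := mul_inv_cancel₀ (qR_ne_zero N)
    linear_combination ((qhR N)⁻¹ * (qR N ^ (ρ : ℕ))⁻¹ * eNil N ρ σ) * hc

lemma e_mul_khM (N : ℕ) (hN0 : N ≠ 0) :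
    eNil N * khalfMNil N = qR N • (khalfMNil N * eNil N) := by
  rw [khalfM_diag]
  ext ρ σ
  rw [Matrix.mul_diagonal, Matrix.smul_apply, Matrix.diagonal_mul, smul_eq_mul]
  by_cases he : eNil N ρ σ = 0
  · rw [he]; ring
  · rw [eNil_support N hN0 ρ σ he, pow_succ]; ring

lemma khM_kh_comm (N : ℕ) :
    khalfMNil N * khalfNil N = khalfNil N * khalfMNil N := by
  rw [khalf_diag, khalfM_diag, Matrix.diagonal_mul_diagonal, Matrix.diagonal_mul_diagonal]
  ext i j
  by_cases h : i = j
  · subst h; rw [Matrix.diagonal_apply_eq, Matrix.diagonal_apply_eq]; ring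
  · rw [Matrix.diagonal_apply_ne _ h, Matrix.diagonal_apply_ne _ h]

-- nilpotency of single-site operators
lemma up_shift_pow (N : ℕ) (hN0 : N ≠ 0) (A : Matrix (Fin N) (Fin N) ℂ)
    (hA : ∀ ρ σ, A ρ σ ≠ 0 → (ρ : ℕ) = (σ : ℕ) + 1) : A ^ N = 0 := by
  have key : ∀ k (ρ σ : Fin N), (A ^ k) ρ σ ≠ 0 → (ρ : ℕ) = (σ : ℕ) + k := by
    intro k
    induction k with
    | zero =>
      intro ρ σ h
      have heq : ρ = σ := by
        by_contra hne
        rw [pow_zero, Matrix.one_apply_ne hne] at h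
        exact h rfl
      subst heq; simp
    | succ k ih =>
      intro ρ σ h
      rw [pow_succ, Matrix.mul_apply] at h
      obtain ⟨τ, -, hτ⟩ := Finset.exists_ne_zero_of_sum_ne_zero h
      have h1 := ih ρ τ (left_ne_zero_of_mul hτ)
      have h2 := hA τ σ (right_ne_zero_of_mul hτ)
      omega
  ext ρ σ
  rw [Matrix.zero_apply]
  by_contra h
  have := key N ρ σ h
  have := ρ.isLt
  omega

lemma down_shift_pow (N : ℕ) (hN0 : N ≠ 0) (A : Matrix (Fin N) (Fin N) ℂ)
    (hA : ∀ ρ σ, A ρ σ ≠ 0 → (σ : ℕ) = (ρ : ℕ) + 1) : A ^ N = 0 := by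
  have key : ∀ k (ρ σ : Fin N), (A ^ k) ρ σ ≠ 0 → (σ : ℕ) = (ρ : ℕ) + k := by
    intro k
    induction k with
    | zero =>
      intro ρ σ h
      have heq : ρ = σ := by
        by_contra hne
        rw [pow_zero, Matrix.one_apply_ne hne] at h
        exact h rfl
      subst heq; simp
    | succ k ih =>
      intro ρ σ h
      rw [pow_succ, Matrix.mul_apply] at h
      obtain ⟨τ, -, hτ⟩ := Finset.exists_ne_zero_of_sum_ne_zero h
      have h1 := ih ρ τ (left_ne_zero_of_mul hτ)
      have h2 := hA τ σ (right_ne_zero_of_mul hτ)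
      omega
  ext ρ σ
  rw [Matrix.zero_apply]
  by_contra h
  have := key N ρ σ h
  have := σ.isLt
  omega

lemma fNil_pow (N : ℕ) (hN0 : N ≠ 0) : fNil N ^ N = 0 :=
  up_shift_pow N hN0 _ (fNil_support N hN0)

lemma eNil_pow (N : ℕ) (hN0 : N ≠ 0) : eNil N ^ N = 0 :=
  down_shift_pow N hN0 _ (eNil_support N hN0)

-- tensorOp algebra
lemma tensorOp_mul {N L : ℕ} (A B : Fin L → Matrix (Fin N) (Fin N) ℂ) :
    tensorOp A * tensorOp B = tensorOp fun j => A j * B j := by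
  ext σ τ
  simp only [tensorOp, Matrix.mul_apply, Matrix.of_apply]
  calc (∑ ρ : Fin L → Fin N, (∏ j, A j (σ j) (ρ j)) * ∏ j, B j (ρ j) (τ j))
      = ∑ ρ : Fin L → Fin N, ∏ j, (A j (σ j) (ρ j) * B j (ρ j) (τ j)) :=
        Finset.sum_congr rfl fun ρ _ => (Finset.prod_mul_distrib).symm
    _ = ∑ ρ ∈ Fintype.piFinset (fun _ : Fin L => (Finset.univ : Finset (Fin N))),
          ∏ j, (A j (σ j) (ρ j) * B j (ρ j) (τ j)) := by rw [Fintype.piFinset_univ]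
    _ = ∏ j, ∑ r : Fin N, (A j (σ j) r * B j r (τ j)) :=
        (Finset.prod_univ_sum (fun _ : Fin L => (Finset.univ : Finset (Fin N)))
          (fun j r => A j (σ j) r * B j r (τ j))).symm
    _ = ∏ j, (A j * B j) (σ j) (τ j) :=
        Finset.prod_congr rfl fun j _ => (Matrix.mul_apply).symm

lemma tensorOp_one {N L : ℕ} : (tensorOp fun _ : Fin L => (1 : Matrix (Fin N) (Fin N) ℂ)) = 1 := by
  ext σ τ
  simp only [tensorOp, Matrix.of_apply, Matrix.one_apply]
  by_cases h : σ = τ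
  · subst h
    simp
  · rw [if_neg h]
    obtain ⟨i, hi⟩ : ∃ i, σ i ≠ τ i := by
      by_contra hc
      push_neg at hc
      exact h (funext hc)
    exact Finset.prod_eq_zero (Finset.mem_univ i) (by rw [if_neg hi])

lemma tensorOp_pow {N L : ℕ} (M : Fin L → Matrix (Fin N) (Fin N) ℂ) (n : ℕ) :
    (tensorOp M) ^ n = tensorOp fun j => M j ^ n := by
  induction n with
  | zero => simp only [pow_zero]; exact tensorOp_one.symm
  | succ n ih =>
    rw [pow_succ, ih, tensorOp_mul]
    exact congrArg tensorOp (funext fun j => (pow_succ (M j) n).symm)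

lemma tensorOp_zero {N L : ℕ} (M : Fin L → Matrix (Fin N) (Fin N) ℂ) (i : Fin L)
    (h : M i = 0) : tensorOp M = 0 := by
  ext σ τ
  rw [Matrix.zero_apply]
  apply Finset.prod_eq_zero (Finset.mem_univ i)
  rw [h, Matrix.zero_apply]

lemma tensorOp_smul_pointwise {N L : ℕ} (F G : Fin L → Matrix (Fin N) (Fin N) ℂ)
    (c : Fin L → ℂ) (h : ∀ k, F k = c k • G k) :
    tensorOp F = (∏ k, c k) • tensorOp G := by
  ext σ τ
  rw [Matrix.smul_apply, smul_eq_mul]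
  show (∏ j, F j (σ j) (τ j)) = _
  calc (∏ j, F j (σ j) (τ j)) = ∏ j, (c j * G j (σ j) (τ j)) := by
        refine Finset.prod_congr rfl fun j _ => ?_
        rw [h j, Matrix.smul_apply, smul_eq_mul]
    _ = (∏ k, c k) * ∏ j, G j (σ j) (τ j) := Finset.prod_mul_distrib

lemma prod_two_sites {L : ℕ} (i j : Fin L) (hij : i ≠ j) (ω : ℂ) :
    (∏ k : Fin L, ((if k = i then ω else 1) * (if k = j then ω else 1))) = ω ^ 2 := by
  rw [Finset.prod_mul_distrib, Finset.prod_ite_eq' Finset.univ i (fun _ => ω),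
    Finset.prod_ite_eq' Finset.univ j (fun _ => ω)]
  simp [sq]

lemma Tmul_comm {N L : ℕ} (Kb S Ka : Matrix (Fin N) (Fin N) ℂ) (ω : ℂ)
    (h1 : Kb * S = ω • (S * Kb)) (h2 : S * Ka = ω • (Ka * S)) (h3 : Kb * Ka = Ka * Kb)
    (i j : Fin L) (hij : i < j) :
    tensorOp (fun k => (if k < j then Kb else if k = j then S else Ka) *
        (if k < i then Kb else if k = i then S else Ka)) =
      ω ^ 2 • tensorOp (fun k => (if k < i then Kb else if k = i then S else Ka) *
        (if k < j then Kb else if k = j then S else Ka)) := by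
  rw [← prod_two_sites i j (ne_of_lt hij) ω]
  apply tensorOp_smul_pointwise
  intro k
  by_cases hki : k = i
  · subst hki
    simp only [if_pos hij, if_neg (lt_irrefl k), if_pos (rfl : k = k),
      if_neg (ne_of_lt hij), mul_one, one_mul]
    exact h1
  · by_cases hkj : k = j
    · subst hkj
      have hki' : ¬ k < i := fun h => absurd (lt_trans h hij) (lt_irrefl k)
      simp only [if_neg (lt_irrefl k), if_pos (rfl : k = k), if_neg hki', if_neg hki,
        mul_one, one_mul]
      exact h2
    · simp only [if_neg hki, if_neg hkj, mul_one, one_smul]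
      rcases lt_trichotomy k i with hlt | heq | hgt
      · simp only [if_pos hlt, if_pos (lt_trans hlt hij)]
      · exact absurd heq hki
      · simp only [if_neg (asymm hgt)]
        rcases lt_trichotomy k j with hlt' | heq' | hgt'
        · simp only [if_pos hlt']
          exact h3
        · exact absurd heq' hkj
        · simp only [if_neg (asymm hgt')]

lemma Tmul_comm' {N L : ℕ} (Kb S Ka : Matrix (Fin N) (Fin N) ℂ) (ω : ℂ)
    (h1 : S * Kb = ω • (Kb * S)) (h2 : Ka * S = ω • (S * Ka)) (h3 : Ka * Kb = Kb * Ka)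
    (i j : Fin L) (hij : i < j) :
    tensorOp (fun k => (if k < i then Kb else if k = i then S else Ka) *
        (if k < j then Kb else if k = j then S else Ka)) =
      ω ^ 2 • tensorOp (fun k => (if k < j then Kb else if k = j then S else Ka) *
        (if k < i then Kb else if k = i then S else Ka)) := by
  rw [← prod_two_sites i j (ne_of_lt hij) ω]
  apply tensorOp_smul_pointwise
  intro k
  by_cases hki : k = i
  · subst hki
    simp only [if_pos hij, if_neg (lt_irrefl k), if_pos (rfl : k = k),
      if_neg (ne_of_lt hij), mul_one, one_mul]
    exact h1
  · by_cases hkj : k = j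
    · subst hkj
      have hki' : ¬ k < i := fun h => absurd (lt_trans h hij) (lt_irrefl k)
      simp only [if_neg (lt_irrefl k), if_pos (rfl : k = k), if_neg hki', if_neg hki,
        mul_one, one_mul]
      exact h2
    · simp only [if_neg hki, if_neg hkj, mul_one, one_smul]
      rcases lt_trichotomy k i with hlt | heq | hgt
      · simp only [if_pos hlt, if_pos (lt_trans hlt hij)]
      · exact absurd heq hki
      · simp only [if_neg (asymm hgt)]
        rcases lt_trichotomy k j with hlt' | heq' | hgt'
        · simp only [if_pos hlt']
          exact h3
        · exact absurd heq' hkj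
        · simp only [if_neg (asymm hgt')]

end NthAux
namespace NthAux

lemma sumPow (N L : ℕ) (hN0 : N ≠ 0) (hcop : Nat.Coprime 2 N)
    (x : Fin L → EndW N L)
    (hcomm : ∀ i j : Fin L, i < j → x j * x i = (qR N ^ 2) • (x i * x j))
    (hnil : ∀ i, x i ^ N = 0) : (∑ i, x i) ^ N = 0 := by
  have hprim : IsPrimitiveRoot (qR N ^ 2) N := (qR_prim N hN0).pow_of_coprime 2 hcop
  exact qmultinomial_nilpotent (qR N ^ 2) N (Nat.pos_of_ne_zero hN0)
    (fun k hk0 hkN => gb_vanish _ N hprim k hk0 hkN) L x hcomm hnil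

lemma sumPow' (N L : ℕ) (hN0 : N ≠ 0) (hcop : Nat.Coprime 2 N)
    (x : Fin L → EndW N L)
    (hcomm : ∀ i j : Fin L, i < j → x i * x j = (qR N ^ 2) • (x j * x i))
    (hnil : ∀ i, x i ^ N = 0) : (∑ i, x i) ^ N = 0 := by
  have h := sumPow N L hN0 hcop (fun i => x (Fin.rev i))
    (fun i j hij => hcomm (Fin.rev j) (Fin.rev i) (Fin.rev_lt_rev.mpr hij))
    (fun i => hnil _)
  rwa [Fin.rev_bijective.sum_comp x] at h

lemma Bplus_pow_zero (N L : ℕ) (hN0 : N ≠ 0) (hcop : Nat.Coprime 2 N) :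
    BplusNil N L ^ N = 0 := by
  have key : (∑ i : Fin L, qR N ^ ((i : ℕ) + 1) • tensorOp (fun j =>
      if j < i then khalfMNil N else if j = i then fNil N else khalfNil N)) ^ N = 0 := by
    apply sumPow N L hN0 hcop
    · intro i j hij
      rw [smul_mul_smul_comm, smul_mul_smul_comm]
      simp only [tensorOp_mul]
      rw [Tmul_comm (khalfMNil N) (fNil N) (khalfNil N) (qR N)
        (khM_mul_f N hN0) (f_mul_kh N hN0) (khM_kh_comm N) i j hij]
      rw [smul_smul, smul_smul]
      congr 1
      ring
    · intro i
      rw [smul_pow, tensorOp_pow,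
        tensorOp_zero _ i (by
          simp only [if_neg (lt_irrefl i), if_pos (rfl : i = i)]
          exact fNil_pow N hN0), smul_zero]
  rw [BplusNil, smul_pow, key, smul_zero]

lemma Bminus_pow_zero (N L : ℕ) (hN0 : N ≠ 0) (hcop : Nat.Coprime 2 N) :
    BminusNil N L ^ N = 0 := by
  have key : (∑ i : Fin L, qR N ^ ((i : ℕ) + 1) • tensorOp (fun j =>
      if j < i then khalfNil N else if j = i then fNil N else khalfMNil N)) ^ N = 0 := by
    apply sumPow' N L hN0 hcop
    · intro i j hij
      rw [smul_mul_smul_comm, smul_mul_smul_comm]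
      simp only [tensorOp_mul]
      rw [Tmul_comm' (khalfNil N) (fNil N) (khalfMNil N) (qR N)
        (f_mul_kh N hN0) (khM_mul_f N hN0) (khM_kh_comm N) i j hij]
      rw [smul_smul, smul_smul]
      congr 1
      ring
    · intro i
      rw [smul_pow, tensorOp_pow,
        tensorOp_zero _ i (by
          simp only [if_neg (lt_irrefl i), if_pos (rfl : i = i)]
          exact fNil_pow N hN0), smul_zero]
  rw [BminusNil, smul_pow, key, smul_zero]

lemma Cplus_pow_zero (N L : ℕ) (hN0 : N ≠ 0) (hcop : Nat.Coprime 2 N) :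
    CplusNil N L ^ N = 0 := by
  have key : (∑ i : Fin L, (qR N ^ ((i : ℕ) + 1))⁻¹ • tensorOp (fun j =>
      if j < i then khalfNil N else if j = i then eNil N else khalfMNil N)) ^ N = 0 := by
    apply sumPow N L hN0 hcop
    · intro i j hij
      rw [smul_mul_smul_comm, smul_mul_smul_comm]
      simp only [tensorOp_mul]
      rw [Tmul_comm (khalfNil N) (eNil N) (khalfMNil N) (qR N)
        (kh_mul_e N hN0) (e_mul_khM N hN0) (khM_kh_comm N).symm i j hij]
      rw [smul_smul, smul_smul]
      congr 1
      ring
    · intro i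
      rw [smul_pow, tensorOp_pow,
        tensorOp_zero _ i (by
          simp only [if_neg (lt_irrefl i), if_pos (rfl : i = i)]
          exact eNil_pow N hN0), smul_zero]
  rw [CplusNil, smul_pow, key, smul_zero]

lemma Cminus_pow_zero (N L : ℕ) (hN0 : N ≠ 0) (hcop : Nat.Coprime 2 N) :
    CminusNil N L ^ N = 0 := by
  have key : (∑ i : Fin L, (qR N ^ ((i : ℕ) + 1))⁻¹ • tensorOp (fun j =>
      if j < i then khalfMNil N else if j = i then eNil N else khalfNil N)) ^ N = 0 := by
    apply sumPow' N L hN0 hcop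
    · intro i j hij
      rw [smul_mul_smul_comm, smul_mul_smul_comm]
      simp only [tensorOp_mul]
      rw [Tmul_comm' (khalfMNil N) (eNil N) (khalfNil N) (qR N)
        (e_mul_khM N hN0) (kh_mul_e N hN0) (khM_kh_comm N).symm i j hij]
      rw [smul_smul, smul_smul]
      congr 1
      ring
    · intro i
      rw [smul_pow, tensorOp_pow,
        tensorOp_zero _ i (by
          simp only [if_neg (lt_irrefl i), if_pos (rfl : i = i)]
          exact eNil_pow N hN0), smul_zero]
  rw [CminusNil, smul_pow, key, smul_zero]

end NthAux

/-- at the root of unity `q = exp(2π√−1/N)` the `N`-th powers of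
`B_±` and `C_±` vanish. -/
theorem Nth_powers_vanish (N L : ℕ) (hN : 3 ≤ N) (hNodd : Odd N) (hL : 1 ≤ L) :
    BplusNil N L ^ N = 0 ∧ BminusNil N L ^ N = 0 ∧
    CplusNil N L ^ N = 0 ∧ CminusNil N L ^ N = 0 := by
  have hN0 : N ≠ 0 := by omega
  have hcop : Nat.Coprime 2 N := by
    rw [Nat.prime_two.coprime_iff_not_dvd]
    intro hdvd
    rw [Nat.odd_iff] at hNodd
    omega
  exact ⟨NthAux.Bplus_pow_zero N L hN0 hcop, NthAux.Bminus_pow_zero N L hN0 hcop,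
    NthAux.Cplus_pow_zero N L hN0 hcop, NthAux.Cminus_pow_zero N L hN0 hcop⟩
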